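/- Equivalence of the Joseph form and the standard form of the constrained Riccati update: Q + KᵀRK + ĀᵀPĀ = Q + AᵀMᵀPMA − AᵀMᵀPD(R + DᵀPD)⁻¹DᵀPMA, where Ā := A − BK − CL. -/

import Mathlib

open Matrix

theorem aux_joseph {n m : ℕ} (Q P X : Matrix (Fin n) (Fin n) ℝ) (D : Matrix (Fin n) (Fin m) ℝ)
    (R S : Matrix (Fin m) (Fin m) ℝ) (hPs : Pᵀ = P) (hS : S = R + Dᵀ * P * D)
    (hinv : S⁻¹ * S = 1) (hSi : (S⁻¹)ᵀ = S⁻¹) :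
    Q + (S⁻¹ * (Dᵀ * P * X))ᵀ * R * (S⁻¹ * (Dᵀ * P * X)) +
      (X - D * (S⁻¹ * (Dᵀ * P * X)))ᵀ * P * (X - D * (S⁻¹ * (Dᵀ * P * X))) =
    Q + Xᵀ * P * X - Xᵀ * P * D * S⁻¹ * (Dᵀ * P * X) := by
  have key : S⁻¹ * (R * (S⁻¹ * (Dᵀ * (P * X)))) +
      S⁻¹ * (Dᵀ * (P * (D * (S⁻¹ * (Dᵀ * (P * X)))))) = S⁻¹ * (Dᵀ * (P * X)) := by
    have h1 : S⁻¹ * (R * (S⁻¹ * (Dᵀ * (P * X)))) +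
        S⁻¹ * (Dᵀ * (P * (D * (S⁻¹ * (Dᵀ * (P * X)))))) =
        (S⁻¹ * S) * (S⁻¹ * (Dᵀ * (P * X))) := by
      rw [hS]
      simp only [Matrix.mul_add, Matrix.add_mul, Matrix.mul_assoc]
    rw [h1, hinv, Matrix.one_mul]
  have h2 := congrArg (fun Z => Xᵀ * (P * (D * Z))) key
  simp only [Matrix.mul_add] at h2
  simp only [Matrix.transpose_sub, Matrix.transpose_mul, hPs, hSi, Matrix.transpose_transpose,
    Matrix.sub_mul, Matrix.mul_sub, Matrix.mul_assoc]
  rw [← h2]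
  abel

theorem joseph_form_eq_standard_form {n m p : ℕ}
    (A : Matrix (Fin n) (Fin n) ℝ) (B : Matrix (Fin n) (Fin m) ℝ)
    (C : Matrix (Fin n) (Fin p) ℝ) (G : Matrix (Fin p) (Fin n) ℝ)
    (hGC : IsUnit (G * C))
    (M : Matrix (Fin n) (Fin n) ℝ)
    (hM : M = 1 - C * (G * C)⁻¹ * G)
    (D : Matrix (Fin n) (Fin m) ℝ)
    (hD : D = B - C * (G * C)⁻¹ * (G * B))
    (Q : Matrix (Fin n) (Fin n) ℝ) (hQ : Q.PosSemidef)
    (R : Matrix (Fin m) (Fin m) ℝ) (hR : R.PosDef)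
    (P : Matrix (Fin n) (Fin n) ℝ) (hP : P.PosSemidef)
    (K : Matrix (Fin m) (Fin n) ℝ)
    (hK : K = (R + Dᵀ * P * D)⁻¹ * (Dᵀ * P * M * A))
    (L : Matrix (Fin p) (Fin n) ℝ)
    (hL : L = (G * C)⁻¹ * (G * (A - B * K)))
    (Abar : Matrix (Fin n) (Fin n) ℝ)
    (hAbar : Abar = A - B * K - C * L) :
    Q + Kᵀ * R * K + Abarᵀ * P * Abar =
      Q + Aᵀ * Mᵀ * P * M * A -
        Aᵀ * Mᵀ * P * D * (R + Dᵀ * P * D)⁻¹ * Dᵀ * P * M * A := by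
  have hPs : Pᵀ = P := by
    have := hP.isHermitian
    exact (Matrix.conjTranspose_eq_transpose_of_trivial P).symm.trans this
  have hRs : Rᵀ = R := by
    have := hR.isHermitian
    exact (Matrix.conjTranspose_eq_transpose_of_trivial R).symm.trans this
  have hSpd : (R + Dᵀ * P * D).PosDef := by
    refine hR.add_posSemidef ?_
    have := hP.conjTranspose_mul_mul_same D
    simpa using this
  have hdet : IsUnit (R + Dᵀ * P * D).det := isUnit_iff_ne_zero.2 hSpd.det_pos.ne'
  have hinv : (R + Dᵀ * P * D)⁻¹ * (R + Dᵀ * P * D) = 1 := Matrix.nonsing_inv_mul _ hdet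
  have hSs : (R + Dᵀ * P * D)ᵀ = R + Dᵀ * P * D := by
    simp [Matrix.transpose_add, Matrix.transpose_mul, hRs, hPs, Matrix.mul_assoc]
  have hSi : ((R + Dᵀ * P * D)⁻¹)ᵀ = (R + Dᵀ * P * D)⁻¹ := by
    rw [Matrix.transpose_nonsing_inv, hSs]
  have hA2 : Abar = M * A - D * K := by
    rw [hAbar, hL, hM, hD]
    simp only [Matrix.mul_sub, Matrix.sub_mul, Matrix.mul_assoc, Matrix.one_mul]
    abel
  have hK2 : K = (R + Dᵀ * P * D)⁻¹ * (Dᵀ * P * (M * A)) := by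
    rw [hK, Matrix.mul_assoc (Dᵀ * P) M A]
  have key := aux_joseph Q P (M * A) D R (R + Dᵀ * P * D) hPs rfl hinv hSi
  rw [hA2, hK2, key]
  simp [Matrix.transpose_mul, Matrix.mul_assoc]
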